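/- Let J be a quasimetric on X, f an N-piecewise metric Lipschitz curve from x to y with associated partition points a_0<⋯<a_N. Then J(x,y) ≤ σ(J)^{N-1} · L(f). In particular, if the infimum D_J^{(N)}(x,y) of such lengths equals 0, then x = y. -/

import Mathlib

open Filter Topology
open scoped ENNReal

variable {X : Type*}

/-- The length (in `[0,∞]`) of `f` on `[u,v]`, computed as the supremum of
variations `∑ J (f (t i)) (f (t (i+1)))` over all monotone chains
`u = t 0 ≤ t 1 ≤ ⋯ ≤ t n = v`. -/
noncomputable def pieceLen (J : X → X → ℝ) (f : ℝ → X) (u v : ℝ) : ℝ≥0∞ :=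
  ⨆ (n : ℕ) (t : ℕ → ℝ) (_ : Monotone t ∧ t 0 = u ∧ t n = v),
    ∑ i ∈ Finset.range n, ENNReal.ofReal (J (f (t i)) (f (t (i + 1))))

/-- On the piece `[u,v]`, `J` is a metric on the image `f([u,v])` (i.e. the
genuine triangle inequality holds there) and `f` is Lipschitz. -/
def IsPiece (J : X → X → ℝ) (f : ℝ → X) (u v : ℝ) : Prop :=
  (∀ s ∈ Set.Icc u v, ∀ t ∈ Set.Icc u v, ∀ r ∈ Set.Icc u v,
      J (f s) (f r) ≤ J (f s) (f t) + J (f t) (f r)) ∧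
  (∃ C : ℝ, ∀ s ∈ Set.Icc u v, ∀ t ∈ Set.Icc u v, J (f s) (f t) ≤ C * |s - t|)

/-- `f : [a,b] → (X,J)` is an `N`-piecewise metric Lipschitz curve with
partition `P`: `a = P 0 < P 1 < ⋯ < P N = b`, and on each `[P i, P (i+1)]`
the function `J` is a metric on the image and `f` is Lipschitz. -/
def IsPML (J : X → X → ℝ) (N : ℕ) (a b : ℝ) (f : ℝ → X) (P : ℕ → ℝ) : Prop :=
  P 0 = a ∧ P N = b ∧ (∀ i < N, P i < P (i + 1)) ∧
  ∀ i < N, IsPiece J f (P i) (P (i + 1))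

/-- The length of an `N`-piecewise metric Lipschitz curve: the sum of the
lengths of its pieces. -/
noncomputable def pmlLength (J : X → X → ℝ) (N : ℕ) (f : ℝ → X) (P : ℕ → ℝ) : ℝ≥0∞ :=
  ∑ i ∈ Finset.range N, pieceLen J f (P i) (P (i + 1))

/-- `D_J^{(N)}(x,y)`: the infimal length of `N`-piecewise metric Lipschitz
curves on `[0,1]` from `x` to `y` (`∞` if there are none). -/
noncomputable def DJN (J : X → X → ℝ) (N : ℕ) (x y : X) : ℝ≥0∞ :=
  ⨅ (f : ℝ → X) (P : ℕ → ℝ) (_ : IsPML J N 0 1 f P ∧ f 0 = x ∧ f 1 = y),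
    pmlLength J N f P

/-- `D_J(x,y) = lim_{N→∞} D_J^{(N)}(x,y)`; since `D_J^{(N)}` is nonincreasing
in `N`, this limit is the infimum over `N`. -/
noncomputable def DJ (J : X → X → ℝ) (x y : X) : ℝ≥0∞ :=
  ⨅ N : ℕ, DJN J N x y

lemma chain_ineq (J : X → X → ℝ) (σ : ℝ) (hnonneg : ∀ x y, 0 ≤ J x y) (hσ : 1 ≤ σ)
    (htri : ∀ x y z, J x y ≤ σ * (J x z + J z y)) :
    ∀ n (z : ℕ → X),
      J (z 0) (z (n + 1)) ≤ σ ^ n * ∑ i ∈ Finset.range (n + 1), J (z i) (z (i + 1)) := by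
  intro n
  induction n with
  | zero => intro z; simp
  | succ n ih =>
    intro z
    have h2 : J (z 1) (z (n + 2)) ≤ σ ^ n * ∑ i ∈ Finset.range (n + 1), J (z (i + 1)) (z (i + 2)) := by
      simpa using ih (fun i => z (i + 1))
    have hsum : ∑ i ∈ Finset.range (n + 2), J (z i) (z (i + 1))
        = (∑ i ∈ Finset.range (n + 1), J (z (i + 1)) (z (i + 2))) + J (z 0) (z 1) := by
      rw [Finset.sum_range_succ']
    have h1 := htri (z 0) (z (n + 2)) (z 1)
    have hS : 0 ≤ ∑ i ∈ Finset.range (n + 1), J (z (i + 1)) (z (i + 2)) :=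
      Finset.sum_nonneg fun i _ => hnonneg _ _
    have h01 : 0 ≤ J (z 0) (z 1) := hnonneg _ _
    have hσ0 : 0 < σ := lt_of_lt_of_le one_pos hσ
    have h1n : (1:ℝ) ≤ σ ^ n := one_le_pow₀ hσ
    rw [hsum]
    calc J (z 0) (z (n + 2)) ≤ σ * (J (z 0) (z 1) + J (z 1) (z (n + 2))) := h1
      _ ≤ σ * (J (z 0) (z 1) + σ ^ n * ∑ i ∈ Finset.range (n + 1), J (z (i + 1)) (z (i + 2))) := by
          nlinarith
      _ = σ * J (z 0) (z 1) + σ ^ n * σ * (∑ i ∈ Finset.range (n + 1), J (z (i + 1)) (z (i + 2))) := by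
          ring
      _ ≤ σ ^ n * (σ * J (z 0) (z 1)) + σ ^ n * σ * (∑ i ∈ Finset.range (n + 1), J (z (i + 1)) (z (i + 2))) := by
          nlinarith [mul_le_mul_of_nonneg_right h1n (mul_nonneg hσ0.le h01)]
      _ = σ ^ (n + 1) * ((∑ i ∈ Finset.range (n + 1), J (z (i + 1)) (z (i + 2))) + J (z 0) (z 1)) := by
          rw [pow_succ]; ring
lemma le_pieceLen (J : X → X → ℝ) (f : ℝ → X) {u v : ℝ} (huv : u ≤ v) :
    ENNReal.ofReal (J (f u) (f v)) ≤ pieceLen J f u v := by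
  set t : ℕ → ℝ := fun i => if i = 0 then u else v with ht
  have hmono : Monotone t := by
    intro i j hij
    simp only [ht]
    split_ifs with h1 h2
    · exact le_rfl
    · exact huv
    · omega
    · exact le_rfl
  have : ENNReal.ofReal (J (f u) (f v))
      = ∑ i ∈ Finset.range 1, ENNReal.ofReal (J (f (t i)) (f (t (i + 1)))) := by
    simp [ht]
  rw [this]
  exact le_iSup_of_le 1 (le_iSup_of_le t (le_iSup_of_le ⟨hmono, by simp [ht], by simp [ht]⟩ le_rfl))

/-- If `f` is an `N`-piecewise metric Lipschitz curve from `x` to `y`, then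
`J(x,y) ≤ σ(J)^(N-1) · L(f)`; in particular, `D_J^{(N)}(x,y) = 0` implies
`x = y`. -/
theorem stmt_11 (J : X → X → ℝ) (σ : ℝ)
    (hnonneg : ∀ x y, 0 ≤ J x y)
    (hiff : ∀ x y, J x y = 0 ↔ x = y)
    (hsymm : ∀ x y, J x y = J y x)
    (hσ : 1 ≤ σ)
    (htri : ∀ x y z, J x y ≤ σ * (J x z + J z y))
    (N : ℕ) (a b : ℝ) (x y : X) :
    (∀ (f : ℝ → X) (P : ℕ → ℝ), IsPML J N a b f P → f a = x → f b = y →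
      ENNReal.ofReal (J x y) ≤ ENNReal.ofReal (σ ^ (N - 1)) * pmlLength J N f P) ∧
    (DJN J N x y = 0 → x = y) := by
  have hσ0 : 0 < σ := lt_of_lt_of_le one_pos hσ
  have part1 : ∀ (a b : ℝ) (x y : X) (f : ℝ → X) (P : ℕ → ℝ), IsPML J N a b f P →
      f a = x → f b = y →
      ENNReal.ofReal (J x y) ≤ ENNReal.ofReal (σ ^ (N - 1)) * pmlLength J N f P := by
    intro a b x y f P hPML hfa hfb
    obtain ⟨hP0, hPN, hlt, -⟩ := hPML
    match N with
    | 0 =>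
      have hab : a = b := by rw [← hP0, hPN]
      have hxy : x = y := by rw [← hfa, ← hfb, hab]
      have : J x y = 0 := (hiff x y).mpr hxy
      simp [this]
    | M + 1 =>
      have hxy : J x y ≤ σ ^ M * ∑ i ∈ Finset.range (M + 1), J (f (P i)) (f (P (i + 1))) := by
        have h := chain_ineq J σ hnonneg hσ htri M (fun i => f (P i))
        rw [← hfa, ← hfb, ← hP0, ← hPN]
        simpa using h
      have hpow : (0:ℝ) ≤ σ ^ M := (pow_pos hσ0 M).le
      calc ENNReal.ofReal (J x y)
          ≤ ENNReal.ofReal (σ ^ M * ∑ i ∈ Finset.range (M + 1), J (f (P i)) (f (P (i + 1)))) :=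
            ENNReal.ofReal_le_ofReal hxy
        _ = ENNReal.ofReal (σ ^ M) *
            ∑ i ∈ Finset.range (M + 1), ENNReal.ofReal (J (f (P i)) (f (P (i + 1)))) := by
            rw [ENNReal.ofReal_mul hpow,
              ENNReal.ofReal_sum_of_nonneg (fun i _ => hnonneg _ _)]
        _ ≤ ENNReal.ofReal (σ ^ (M + 1 - 1)) * pmlLength J (M + 1) f P := by
            apply mul_le_mul_right
            exact Finset.sum_le_sum fun i hi =>
              le_pieceLen J f (hlt i (Finset.mem_range.mp hi)).le
  refine ⟨fun f P h h1 h2 => part1 a b x y f P h h1 h2, ?_⟩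
  intro h0
  by_contra hxy
  have hJ : 0 < J x y :=
    (hnonneg x y).lt_of_ne fun h => hxy ((hiff x y).mp h.symm)
  set c := ENNReal.ofReal (σ ^ (N - 1)) with hc
  have hc0 : c ≠ 0 := by
    simp only [hc, ne_eq, ENNReal.ofReal_eq_zero, not_le]
    exact pow_pos hσ0 _
  have hcT : c ≠ ⊤ := ENNReal.ofReal_ne_top
  have hδ : 0 < ENNReal.ofReal (J x y) / c :=
    ENNReal.div_pos (by simpa using hJ) hcT
  have hlt : DJN J N x y < ENNReal.ofReal (J x y) / c := h0 ▸ hδ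
  simp only [DJN, iInf_lt_iff] at hlt
  obtain ⟨f, P, ⟨hPML, hf0, hf1⟩, hlen⟩ := hlt
  have h1 := part1 0 1 x y f P hPML hf0 hf1
  have h2 : c * pmlLength J N f P < c * (ENNReal.ofReal (J x y) / c) :=
    ENNReal.mul_lt_mul_right hc0 hcT hlen
  rw [ENNReal.mul_div_cancel hc0 hcT] at h2
  exact absurd (lt_of_le_of_lt h1 h2) (lt_irrefl _)
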